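/- Let (X,d,μ) be a geodesic metric measure space (μ a positive inner regular Radon measure with full support) such that D_R < ∞ for some R > 0. Then for every x ∈ X, the ball B(x,R) with the induced distance and measure is a doubling metric measure space with doubling constant at most D_R^3; more precisely, for every x ∈ X, r ∈ (0,R], y ∈ B(x,r), and r' ∈ (0,2r], one has μ(B(y,2r') ∩ B(x,r)) ≤ D_R^3 μ(B(y,r') ∩ B(x,r)). -/
import Mathlib


open MeasureTheory Metric Set ENNReal NNReal

/-- on a geodesic space with locally doubling measure (doubling constant
`D` for radii `≤ R`), every ball `B(x,R)` with the induced measure is doubling with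
constant at most `D^3`. -/
theorem stmt_1 {X : Type*} [MetricSpace X] [MeasurableSpace X] [BorelSpace X]
    [LocallyCompactSpace X] (μ : Measure X) [μ.InnerRegular] [IsFiniteMeasureOnCompacts μ]
    (hsupp : ∀ (x : X) (r : ℝ), 0 < r → 0 < μ (ball x r))
    (hgeo : ∀ x y : X, ∃ γ : ℝ → X, γ 0 = x ∧ γ 1 = y ∧
      ∀ s t : ℝ, dist (γ s) (γ t) = |s - t| * dist x y)
    (R : ℝ) (hR : 0 < R) (D : ℝ≥0) (hD1 : 1 ≤ D)
    (hD : ∀ (x : X), ∀ r ∈ Set.Ioc (0 : ℝ) R, μ (ball x (2 * r)) ≤ (D : ℝ≥0∞) * μ (ball x r)) :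
    ∀ (x : X), ∀ r ∈ Set.Ioc (0 : ℝ) R, ∀ y ∈ ball x r, ∀ r' ∈ Set.Ioc (0 : ℝ) (2 * r),
      μ (ball y (2 * r') ∩ ball x r) ≤ (D : ℝ≥0∞) ^ 3 * μ (ball y r' ∩ ball x r) := by
  -- auxiliary: three applications of doubling
  have key : ∀ (z : X) (s : ℝ), 0 < s → 4 * s ≤ R →
      μ (ball z (8 * s)) ≤ (D : ℝ≥0∞) ^ 3 * μ (ball z s) := by
    intro z s hs hsR
    have h1 := hD z s ⟨hs, by linarith⟩
    have h2 := hD z (2 * s) ⟨by linarith, by linarith⟩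
    have h4 := hD z (4 * s) ⟨by linarith, hsR⟩
    calc μ (ball z (8 * s)) = μ (ball z (2 * (4 * s))) := by rw [show (8:ℝ) * s = 2 * (4 * s) by ring]
      _ ≤ D * μ (ball z (4 * s)) := h4
      _ = D * μ (ball z (2 * (2 * s))) := by rw [show (4:ℝ) * s = 2 * (2 * s) by ring]
      _ ≤ D * (D * μ (ball z (2 * s))) := by exact mul_le_mul_right h2 _
      _ ≤ D * (D * (D * μ (ball z s))) := by
          exact mul_le_mul_right (mul_le_mul_right h1 _) _
      _ = (D : ℝ≥0∞) ^ 3 * μ (ball z s) := by ring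
  intro x r hr y hy r' hr'
  obtain ⟨hr0, hrR⟩ := hr
  obtain ⟨hr'0, hr'2r⟩ := hr'
  rw [mem_ball] at hy  -- dist y x < r
  set a : ℝ := min (r / 4) (r' / 2) with ha_def
  have ha0 : 0 < a := lt_min (by linarith) (by linarith)
  have har : a ≤ r / 4 := min_le_left _ _
  have har' : a ≤ r' / 2 := min_le_right _ _
  obtain ⟨γ, hγ0, hγ1, hγd⟩ := hgeo y x
  set t : ℝ := min 1 (a / dist y x) with ht_def
  set z : X := γ t with hz_def
  have hdyx0 : 0 ≤ dist y x := dist_nonneg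
  have ht0 : 0 ≤ t := by
    rcases eq_or_lt_of_le hdyx0 with h | h
    · simp [ht_def, ← h]
    · exact le_min zero_le_one (le_of_lt (div_pos ha0 h))
  have ht1 : t ≤ 1 := min_le_left _ _
  have hdyz : dist y z = t * dist y x := by
    have := hγd 0 t
    rw [hγ0] at this
    rw [this, abs_of_nonpos (by linarith), neg_sub, sub_zero]
  have hdxz : dist x z = (1 - t) * dist y x := by
    have := hγd 1 t
    rw [hγ1] at this
    rw [dist_comm y x] at this ⊢
    rw [this, abs_of_nonneg (by linarith)]
  -- F1 : dist y z ≤ a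
  have hF1 : dist y z ≤ a := by
    rw [hdyz]
    rcases eq_or_lt_of_le hdyx0 with h | h
    · rw [← h, mul_zero]; exact le_of_lt ha0
    · calc t * dist y x ≤ (a / dist y x) * dist y x := by
            exact mul_le_mul_of_nonneg_right (min_le_right _ _) hdyx0
        _ = a := div_mul_cancel₀ _ (ne_of_gt h)
  -- F2 : dist x z + a ≤ max a (dist y x)
  have hF2 : dist x z + a ≤ max a (dist y x) := by
    rcases eq_or_lt_of_le hdyx0 with h | h
    · rw [hdxz, ← h, mul_zero, zero_add]; exact le_max_left _ _
    · rcases le_or_gt (dist y x) a with hle | hlt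
      · have h1t : (1 : ℝ) ≤ a / dist y x := (one_le_div h).mpr hle
        have : t = 1 := min_eq_left h1t
        rw [hdxz, this]
        simp only [sub_self, zero_mul, zero_add]
        exact le_max_left _ _
      · have hdiv : a / dist y x < 1 := (div_lt_one h).mpr hlt
        have : t = a / dist y x := min_eq_right (le_of_lt hdiv)
        rw [hdxz, this]
        have : (1 - a / dist y x) * dist y x = dist y x - a := by
          field_simp
        rw [this]
        have : dist y x - a + a = dist y x := by ring
        rw [this]
        exact le_max_right _ _
  -- F3 : dist x z ≤ dist y x
  have hF3 : dist x z ≤ dist y x := by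
    rw [hdxz]
    nlinarith
  -- inclusion 1 : ball z a ⊆ ball y r' ∩ ball x r
  have hsub1 : ball z a ⊆ ball y r' ∩ ball x r := by
    intro w hw
    rw [mem_ball] at hw
    constructor
    · rw [mem_ball]
      have : dist w y ≤ dist w z + dist z y := dist_triangle _ _ _
      rw [dist_comm z y] at this
      linarith
    · rw [mem_ball]
      have htri : dist w x ≤ dist w z + dist z x := dist_triangle _ _ _
      rw [dist_comm z x] at htri
      have hmax : max a (dist y x) < r := max_lt (by linarith) hy
      linarith
  -- inclusion 2 : ball y (2*r') ∩ ball x r ⊆ ball z (8*a)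
  have hsub2 : ball y (2 * r') ∩ ball x r ⊆ ball z (8 * a) := by
    rintro w ⟨hw1, hw2⟩
    rw [mem_ball] at hw1 hw2 ⊢
    have hA : dist w z ≤ dist w y + dist y z := dist_triangle _ _ _
    have hB : dist w z ≤ dist w x + dist x z := dist_triangle _ _ _
    rcases le_total (r / 4) (r' / 2) with h | h
    · have : a = r / 4 := min_eq_left h
      -- dist w z < r + dist y x < 2r = 8a
      linarith
    · have : a = r' / 2 := min_eq_right h
      -- dist w z < 2r' + a = 5r'/2 ≤ 4r' = 8a
      linarith
  calc μ (ball y (2 * r') ∩ ball x r) ≤ μ (ball z (8 * a)) := measure_mono hsub2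
    _ ≤ (D : ℝ≥0∞) ^ 3 * μ (ball z a) := key z a ha0 (by linarith)
    _ ≤ (D : ℝ≥0∞) ^ 3 * μ (ball y r' ∩ ball x r) :=
        mul_le_mul_right (measure_mono hsub1) _
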